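/- Let R be a finite commutative local ring of order q^n with R/J(R) a field of order q and J(R)^{n-1} ≠ 0. For each i with 1 ≤ i ≤ n, |J(R)^{i-1} \ J(R)^i| = q^{n-i+1} - q^{n-i}; in particular the powers of J(R) form a strictly decreasing chain R ⊋ J ⊋ J^2 ⊋ … ⊋ J^n = 0 with |J^i| = q^{n-i}. -/

import Mathlib

theorem card_jacobson_powers {R : Type*} [CommRing R] [Fintype R] [IsLocalRing R]
    (q n : ℕ) (hn : 0 < n)
    (hcard : Fintype.card R = q ^ n)
    (hres : Nat.card (R ⧸ (⊥ : Ideal R).jacobson) = q)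
    (hJ : ((⊥ : Ideal R).jacobson) ^ (n - 1) ≠ ⊥) :
    (∀ i : ℕ, 1 ≤ i → i ≤ n →
      ((((⊥ : Ideal R).jacobson ^ (i - 1) : Ideal R) : Set R) \
        (((⊥ : Ideal R).jacobson ^ i : Ideal R) : Set R)).ncard
        = q ^ (n - i + 1) - q ^ (n - i)) ∧
    (∀ i : ℕ, i < n →
      ((⊥ : Ideal R).jacobson ^ (i + 1) : Ideal R) < ((⊥ : Ideal R).jacobson ^ i : Ideal R)) ∧
    ((⊥ : Ideal R).jacobson) ^ n = ⊥ ∧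
    (∀ i : ℕ, i ≤ n → Nat.card ((⊥ : Ideal R).jacobson ^ i : Ideal R) = q ^ (n - i)) := by
  classical
  set J : Ideal R := (⊥ : Ideal R).jacobson with hJdef
  have hJm : J = IsLocalRing.maximalIdeal R :=
    IsLocalRing.jacobson_eq_maximalIdeal ⊥ bot_ne_top
  -- q ≥ 2
  have hq2 : 2 ≤ q := by
    have hnt : Nontrivial (R ⧸ J) := by
      rw [hJm]
      exact Ideal.Quotient.nontrivial_iff.mpr (IsLocalRing.maximalIdeal.isMaximal R).ne_top
    have := Finite.one_lt_card (α := R ⧸ J)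
    omega
  -- the powers do not stabilize below n
  have hne : ∀ i, i + 1 ≤ n → J ^ (i + 1) ≠ J ^ i := by
    intro i hi heq
    have hstab : ∀ k, J ^ (i + k) = J ^ i := by
      intro k
      induction k with
      | zero => rfl
      | succ k ih =>
        have : J ^ (i + (k + 1)) = J ^ (i + k) * J := by rw [← pow_succ, ← add_assoc]
        rw [this, ih, ← pow_succ, heq]
    obtain ⟨m, hm⟩ := IsArtinianRing.isNilpotent_jacobson_bot (R := R)
    have h1 : J ^ i = ⊥ := by
      have h2 := hstab m
      have hle : J ^ (i + m) ≤ J ^ m := Ideal.pow_le_pow_right (by omega)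
      rw [h2, hm] at hle
      exact le_bot_iff.mp hle
    apply hJ
    have hle : J ^ (n - 1) ≤ J ^ i := Ideal.pow_le_pow_right (by omega)
    rw [h1] at hle
    exact le_bot_iff.mp hle
  -- key counting step
  have key : ∀ i, i + 1 ≤ n →
      q * Nat.card (J ^ (i + 1) : Ideal R) ≤ Nat.card (J ^ i : Ideal R) := by
    intro i hi
    have hle : J ^ (i + 1) ≤ J ^ i := Ideal.pow_le_pow_right (by omega)
    obtain ⟨x, hxi, hxi1⟩ : ∃ x, x ∈ J ^ i ∧ x ∉ J ^ (i + 1) := by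
      by_contra h
      push_neg at h
      exact hne i hi (le_antisymm hle h)
    set M : Ideal R := J ^ i with hM
    set S : Submodule R M := Submodule.comap M.subtype (J ^ (i + 1)) with hS
    have hcardS : Nat.card S = Nat.card (J ^ (i + 1) : Ideal R) :=
      Nat.card_congr (Submodule.comapSubtypeEquivOfLe hle).toEquiv
    have hsplit : Nat.card M = Nat.card S * Nat.card (M ⧸ S) :=
      Submodule.card_eq_card_quotient_mul_card S
    -- injection of the residue field into M ⧸ S
    set φ : R →ₗ[R] (M ⧸ S) :=
      LinearMap.toSpanSingleton R _ (Submodule.Quotient.mk ⟨x, hxi⟩) with hφ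
    have hφ_apply : ∀ r : R, φ r = Submodule.Quotient.mk ⟨r * x, M.mul_mem_left r hxi⟩ := by
      intro r
      rw [hφ]
      rw [LinearMap.toSpanSingleton_apply, ← Submodule.Quotient.mk_smul]
      rfl
    have hker : LinearMap.ker φ = J := by
      ext r
      rw [LinearMap.mem_ker, hφ_apply, Submodule.Quotient.mk_eq_zero, hS,
        Submodule.mem_comap]
      show r * x ∈ J ^ (i + 1) ↔ r ∈ J
      constructor
      · intro hmem
        by_contra hr
        have hu : IsUnit r := by
          by_contra hu
          exact hr (by rw [hJm]; exact hu)
        obtain ⟨u, hu⟩ := hu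
        have : (↑u⁻¹ : R) * (r * x) ∈ J ^ (i + 1) := Ideal.mul_mem_left _ _ hmem
        rw [← hu, ← mul_assoc, Units.inv_mul, one_mul] at this
        exact hxi1 this
      · intro hr
        have : x * r ∈ J ^ i * J := Ideal.mul_mem_mul hxi hr
        rwa [← pow_succ, mul_comm] at this
    have hinj : q ≤ Nat.card (M ⧸ S) := by
      have e1 : Nat.card (R ⧸ J) = Nat.card (LinearMap.range φ) := by
        rw [← hker]
        exact Nat.card_congr φ.quotKerEquivRange.toEquiv
      have e2 : Nat.card (LinearMap.range φ) ≤ Nat.card (M ⧸ S) :=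
        Nat.card_le_card_of_injective _ Subtype.val_injective
      calc q = Nat.card (R ⧸ J) := hres.symm
        _ = Nat.card (LinearMap.range φ) := e1
        _ ≤ Nat.card (M ⧸ S) := e2
    calc q * Nat.card (J ^ (i + 1) : Ideal R)
        = Nat.card (J ^ (i + 1) : Ideal R) * q := mul_comm _ _
      _ ≤ Nat.card S * Nat.card (M ⧸ S) := by
          rw [hcardS]; exact Nat.mul_le_mul_left _ hinj
      _ = Nat.card M := hsplit.symm
  -- card of J^0
  have c0 : Nat.card (J ^ 0 : Ideal R) = q ^ n := by
    rw [pow_zero, Ideal.one_eq_top]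
    rw [Nat.card_congr Submodule.topEquiv.toEquiv, Nat.card_eq_fintype_card, hcard]
  have claim1 : ∀ k, k ≤ n → q ^ k * Nat.card (J ^ k : Ideal R) ≤ q ^ n := by
    intro k
    induction k with
    | zero => intro _; simpa using c0.le
    | succ k ih =>
      intro hk
      have h1 := key k hk
      calc q ^ (k + 1) * Nat.card (J ^ (k + 1) : Ideal R)
          = q ^ k * (q * Nat.card (J ^ (k + 1) : Ideal R)) := by ring
        _ ≤ q ^ k * Nat.card (J ^ k : Ideal R) := Nat.mul_le_mul_left _ h1
        _ ≤ q ^ n := ih (by omega)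
  have claim2 : ∀ m k, k + m = n →
      q ^ m * Nat.card (J ^ n : Ideal R) ≤ Nat.card (J ^ k : Ideal R) := by
    intro m
    induction m with
    | zero =>
      intro k hk
      have : k = n := by omega
      subst this
      simp
    | succ m ih =>
      intro k hk
      have h1 := ih (k + 1) (by omega)
      calc q ^ (m + 1) * Nat.card (J ^ n : Ideal R)
          = q * (q ^ m * Nat.card (J ^ n : Ideal R)) := by ring
        _ ≤ q * Nat.card (J ^ (k + 1) : Ideal R) := Nat.mul_le_mul_left _ h1
        _ ≤ Nat.card (J ^ k : Ideal R) := key k (by omega)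
  have cn1 : Nat.card (J ^ n : Ideal R) = 1 := by
    have pos : 0 < Nat.card (J ^ n : Ideal R) := Nat.card_pos
    have h1 := claim1 n le_rfl
    have hqn : 0 < q ^ n := Nat.pow_pos (by omega)
    have : Nat.card (J ^ n : Ideal R) ≤ 1 := by
      by_contra hc
      push_neg at hc
      have : q ^ n * 2 ≤ q ^ n * Nat.card (J ^ n : Ideal R) :=
        Nat.mul_le_mul_left _ hc
      omega
    omega
  have cval : ∀ k, k ≤ n → Nat.card (J ^ k : Ideal R) = q ^ (n - k) := by
    intro k hk
    have hlow : q ^ (n - k) ≤ Nat.card (J ^ k : Ideal R) := by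
      have := claim2 (n - k) k (by omega)
      rwa [cn1, mul_one] at this
    have hup : Nat.card (J ^ k : Ideal R) ≤ q ^ (n - k) := by
      have h1 := claim1 k hk
      have h2 : q ^ n = q ^ k * q ^ (n - k) := by rw [← pow_add]; congr 1; omega
      rw [h2] at h1
      exact Nat.le_of_mul_le_mul_left h1 (Nat.pow_pos (by omega))
    omega
  have Jn_bot : J ^ n = ⊥ := by
    have hsub : Subsingleton (J ^ n : Ideal R) := by
      exact (Nat.card_eq_one_iff_unique.mp cn1).1
    rw [eq_bot_iff]
    intro y hy
    have : (⟨y, hy⟩ : (J ^ n : Ideal R)) = ⟨0, (J ^ n).zero_mem⟩ := Subsingleton.elim _ _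
    have hy0 : y = 0 := congrArg Subtype.val this
    simp [hy0]
  refine ⟨?_, ?_, Jn_bot, fun i hi => cval i hi⟩
  · intro i h1 h2
    have hle : J ^ i ≤ J ^ (i - 1) := Ideal.pow_le_pow_right (by omega)
    have hsub : ((J ^ i : Ideal R) : Set R) ⊆ ((J ^ (i - 1) : Ideal R) : Set R) := hle
    rw [Set.ncard_diff hsub]
    rw [← Nat.card_coe_set_eq, ← Nat.card_coe_set_eq]
    have e1 : Nat.card ((J ^ (i - 1) : Ideal R) : Set R) = q ^ (n - i + 1) := by
      have := cval (i - 1) (by omega)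
      have h3 : n - (i - 1) = n - i + 1 := by omega
      rw [h3] at this
      exact this
    have e2 : Nat.card ((J ^ i : Ideal R) : Set R) = q ^ (n - i) := cval i h2
    rw [e1, e2]
  · intro i hi
    exact lt_of_le_of_ne (Ideal.pow_le_pow_right (by omega)) (hne i hi)
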